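/- For any graph G, a vertex split of v followed by adding an edge incident to one of the resulting vertices produces a graph that equals (up to isomorphism fixing other vertices) the result of first adding the corresponding edge at v (or doing nothing if it exists) and then splitting v with an enlarged covering. -/

import Mathlib

/-- The relation underlying an inclusive vertex split of `v` with covering `U₁, U₂`
of `N(v)`.  The split vertices are `v₁ = some v` and `v₂ = none`; every other vertex
`x` of `G` is represented by `some x`. -/
def splitRel {V : Type*} (G : SimpleGraph V) (v : V) (U₁ U₂ : Set V) :
    Option V → Option V → Prop
  | some x, some y => (x ≠ v ∧ y ≠ v ∧ G.Adj x y) ∨ (x = v ∧ y ∈ U₁)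
  | none, some y => y ∈ U₂
  | _, _ => False

/-- The graph obtained from `G` by an inclusive vertex split of `v` with covering
`U₁ ∪ U₂ = N(v)`: remove `v` and add two new non-adjacent vertices `v₁ = some v`
and `v₂ = none` with `N(v₁) = U₁` and `N(v₂) = U₂`. -/
def splitGraph {V : Type*} (G : SimpleGraph V) (v : V) (U₁ U₂ : Set V) :
    SimpleGraph (Option V) :=
  SimpleGraph.fromRel (splitRel G v U₁ U₂)

/-- A vertex split of `v` followed by the addition of an edge between `u` and one of
the resulting split vertices `w` (so `w = some v` with `u ∉ U₁`, or `w = none` with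
`u ∉ U₂`) yields the same graph as first adding the corresponding edge `u v` to `G`
(or doing nothing if it already exists) and then splitting `v` with an enlarged
covering. -/
theorem split_then_add_swap {V : Type*} (G : SimpleGraph V) (v u : V)
    (U₁ U₂ : Set V) (hcov : U₁ ∪ U₂ = G.neighborSet v) (huv : u ≠ v) (w : Option V)
    (hw : (w = some v ∧ u ∉ U₁) ∨ (w = none ∧ u ∉ U₂)) :
    ∃ (H : SimpleGraph V) (U₁' U₂' : Set V),
      (H = G ∨ H = G ⊔ SimpleGraph.fromEdgeSet {s(u, v)}) ∧
      U₁' ∪ U₂' = H.neighborSet v ∧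
      (splitGraph G v U₁ U₂) ⊔ SimpleGraph.fromEdgeSet {s(some u, w)} =
        splitGraph H v U₁' U₂' := by
  have hv1 : v ∉ U₁ := by
    intro h
    have : v ∈ G.neighborSet v := hcov ▸ Set.mem_union_left _ h
    exact G.loopless.irrefl v this
  have hv2 : v ∉ U₂ := by
    intro h
    have : v ∈ G.neighborSet v := hcov ▸ Set.mem_union_right _ h
    exact G.loopless.irrefl v this
  have hU : ∀ x, x ∈ U₁ ∨ x ∈ U₂ ↔ G.Adj v x := by
    intro x
    rw [← SimpleGraph.mem_neighborSet, ← hcov]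
    exact Set.mem_union x U₁ U₂
  have hnb : (G ⊔ SimpleGraph.fromEdgeSet {s(u, v)}).neighborSet v
      = insert u (G.neighborSet v) := by
    ext x
    simp only [SimpleGraph.mem_neighborSet, SimpleGraph.sup_adj,
      SimpleGraph.fromEdgeSet_adj, Set.mem_singleton_iff, Sym2.eq, Sym2.rel_iff',
      Prod.mk.injEq, Prod.swap_prod_mk, Set.mem_insert_iff]
    constructor
    · rintro (h | ⟨(⟨rfl, rfl⟩ | ⟨h1, rfl⟩), hne⟩)
      · exact Or.inr h
      · exact absurd rfl huv
      · exact Or.inl rfl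
    · rintro (rfl | h)
      · exact Or.inr ⟨Or.inr ⟨trivial, rfl⟩, fun h => huv h.symm⟩
      · exact Or.inl h
  refine ⟨G ⊔ SimpleGraph.fromEdgeSet {s(u, v)}, ?_⟩
  rcases hw with ⟨rfl, hu⟩ | ⟨rfl, hu⟩
  · refine ⟨insert u U₁, U₂, Or.inr rfl, ?_, ?_⟩
    · rw [hnb, ← hcov, Set.insert_union]
    · ext a b
      match a, b with
      | some x, some y =>
        simp only [splitGraph, SimpleGraph.sup_adj, SimpleGraph.fromRel_adj,
          SimpleGraph.fromEdgeSet_adj, splitRel, Set.mem_singleton_iff,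
          Sym2.eq, Sym2.rel_iff', Prod.mk.injEq, Prod.swap_prod_mk,
          Option.some.injEq, ne_eq, Set.mem_insert_iff]
        constructor
        · aesop
        · aesop
      | some x, none =>
        simp only [splitGraph, SimpleGraph.sup_adj, SimpleGraph.fromRel_adj,
          SimpleGraph.fromEdgeSet_adj, splitRel, Set.mem_singleton_iff,
          Sym2.eq, Sym2.rel_iff', Prod.mk.injEq, Prod.swap_prod_mk,
          Option.some.injEq, ne_eq, Set.mem_insert_iff]
        constructor
        · aesop
        · aesop
      | none, some y =>
        simp only [splitGraph, SimpleGraph.sup_adj, SimpleGraph.fromRel_adj,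
          SimpleGraph.fromEdgeSet_adj, splitRel, Set.mem_singleton_iff,
          Sym2.eq, Sym2.rel_iff', Prod.mk.injEq, Prod.swap_prod_mk,
          Option.some.injEq, ne_eq, Set.mem_insert_iff]
        constructor
        · aesop
        · aesop
      | none, none =>
        simp [splitGraph, splitRel]
  · refine ⟨U₁, insert u U₂, Or.inr rfl, ?_, ?_⟩
    · rw [hnb, ← hcov, Set.union_insert]
    · ext a b
      match a, b with
      | some x, some y =>
        simp only [splitGraph, SimpleGraph.sup_adj, SimpleGraph.fromRel_adj,
          SimpleGraph.fromEdgeSet_adj, splitRel, Set.mem_singleton_iff,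
          Sym2.eq, Sym2.rel_iff', Prod.mk.injEq, Prod.swap_prod_mk,
          Option.some.injEq, ne_eq, Set.mem_insert_iff]
        constructor
        · aesop
        · aesop
      | some x, none =>
        simp only [splitGraph, SimpleGraph.sup_adj, SimpleGraph.fromRel_adj,
          SimpleGraph.fromEdgeSet_adj, splitRel, Set.mem_singleton_iff,
          Sym2.eq, Sym2.rel_iff', Prod.mk.injEq, Prod.swap_prod_mk,
          Option.some.injEq, ne_eq, Set.mem_insert_iff]
        constructor
        · aesop
        · aesop
      | none, some y =>
        simp only [splitGraph, SimpleGraph.sup_adj, SimpleGraph.fromRel_adj,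
          SimpleGraph.fromEdgeSet_adj, splitRel, Set.mem_singleton_iff,
          Sym2.eq, Sym2.rel_iff', Prod.mk.injEq, Prod.swap_prod_mk,
          Option.some.injEq, ne_eq, Set.mem_insert_iff]
        constructor
        · aesop
        · aesop
      | none, none =>
        simp [splitGraph, splitRel]
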